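/- For an integral domain D the following are equivalent: (i) D is a valuation domain; (ii) D is a t-local GCD domain; (iii) D is a t-local Prüfer v-multiplication domain (PvMD). -/

import Mathlib

open scoped nonZeroDivisors

/-- The `t`-closure of a fractional ideal `E` of an integral domain `D`:
the union (here: supremum, which is a directed union) of `F^v = (F⁻¹)⁻¹` over all
nonzero finitely generated fractional subideals `F` of `E`, viewed as a
`D`-submodule of the fraction field of `D`. -/
noncomputable def tClos (D : Type*) [CommRing D] [IsDomain D]
    (E : FractionalIdeal D⁰ (FractionRing D)) : Submodule D (FractionRing D) :=
  ⨆ F ∈ {F : FractionalIdeal D⁰ (FractionRing D) |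
      F ≠ 0 ∧ F ≤ E ∧ (F : Submodule D (FractionRing D)).FG},
    (((F⁻¹)⁻¹ : FractionalIdeal D⁰ (FractionRing D)) : Submodule D (FractionRing D))

/-- An integral ideal `I` of an integral domain `D` is a `t`-ideal if `I = I^t`. -/
def Ideal.IsT {D : Type*} [CommRing D] [IsDomain D] (I : Ideal D) : Prop :=
  ((I : FractionalIdeal D⁰ (FractionRing D)) : Submodule D (FractionRing D)) = tClos D I

/-- An integral domain is `t`-local if it is local and its maximal ideal is a `t`-ideal. -/
def IsTLocal (A : Type*) [CommRing A] [IsDomain A] : Prop :=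
  ∃ h : IsLocalRing A, Ideal.IsT (@IsLocalRing.maximalIdeal A _ h)


namespace TLocalAux


open FractionalIdeal

variable {D : Type*} [CommRing D] [IsDomain D]

theorem le_tClos_of {E F : FractionalIdeal D⁰ (FractionRing D)} (h1 : F ≠ 0) (h2 : F ≤ E)
    (h3 : (F : Submodule D (FractionRing D)).FG) :
    (((F⁻¹)⁻¹ : FractionalIdeal D⁰ (FractionRing D)) : Submodule D (FractionRing D)) ≤
      tClos D E := by
  have hmem : F ∈ {F : FractionalIdeal D⁰ (FractionRing D) |
      F ≠ 0 ∧ F ≤ E ∧ (F : Submodule D (FractionRing D)).FG} := ⟨h1, h2, h3⟩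
  exact le_biSup (fun F : FractionalIdeal D⁰ (FractionRing D) =>
    (((F⁻¹)⁻¹ : FractionalIdeal D⁰ (FractionRing D)) : Submodule D (FractionRing D))) hmem

theorem coe_le_tClos (E : FractionalIdeal D⁰ (FractionRing D)) :
    (E : Submodule D (FractionRing D)) ≤ tClos D E := by
  intro x hx
  by_cases hx0 : x = 0
  · exact hx0 ▸ (tClos D E).zero_mem
  · have h1 : spanSingleton D⁰ x ≠ 0 := spanSingleton_ne_zero_iff.mpr hx0
    have h2 : spanSingleton D⁰ x ≤ E := spanSingleton_le_iff_mem.mpr hx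
    have h3 : ((spanSingleton D⁰ x : FractionalIdeal D⁰ (FractionRing D)) :
        Submodule D (FractionRing D)).FG := by
      rw [coe_spanSingleton]
      exact ⟨{x}, by simp⟩
    refine le_tClos_of h1 h2 h3 ?_
    show x ∈ ((((spanSingleton D⁰ x)⁻¹)⁻¹ : FractionalIdeal D⁰ (FractionRing D)) :
      Submodule D (FractionRing D))
    rw [spanSingleton_inv, spanSingleton_inv, inv_inv]
    exact mem_spanSingleton_self _ _

theorem tClos_le {E : FractionalIdeal D⁰ (FractionRing D)} {X : Submodule D (FractionRing D)}
    (h : ∀ F : FractionalIdeal D⁰ (FractionRing D), F ≠ 0 → F ≤ E →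
      (F : Submodule D (FractionRing D)).FG →
      (((F⁻¹)⁻¹ : FractionalIdeal D⁰ (FractionRing D)) : Submodule D (FractionRing D)) ≤ X) :
    tClos D E ≤ X :=
  iSup₂_le fun F hF => h F hF.1 hF.2.1 hF.2.2

theorem tClos_mono {E E' : FractionalIdeal D⁰ (FractionRing D)} (h : E ≤ E') :
    tClos D E ≤ tClos D E' :=
  tClos_le fun F h1 h2 h3 => le_tClos_of h1 (h2.trans h) h3

theorem inv_one' : ((1 : FractionalIdeal D⁰ (FractionRing D)))⁻¹ = 1 := by
  rw [inv_eq, FractionalIdeal.div_one]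

theorem tClos_le_one {E : FractionalIdeal D⁰ (FractionRing D)} (hE : E ≤ 1) :
    tClos D E ≤ ((1 : FractionalIdeal D⁰ (FractionRing D)) : Submodule D (FractionRing D)) := by
  refine tClos_le fun F h1 h2 _ => ?_
  have hF1 : F ≤ 1 := h2.trans hE
  have h1F : (1 : FractionalIdeal D⁰ (FractionRing D)) ≤ F⁻¹ := by
    rw [inv_eq, le_div_iff_mul_le h1, one_mul]; exact hF1
  have hFinv0 : F⁻¹ ≠ 0 := fun h => (one_ne_zero : (1 : FractionalIdeal D⁰ (FractionRing D)) ≠ 0) (le_antisymm (h ▸ h1F) (zero_le _))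
  have := inv_anti_mono (I := (1 : FractionalIdeal D⁰ (FractionRing D))) one_ne_zero
    (J := F⁻¹) hFinv0 h1F
  rw [inv_one'] at this
  exact coe_le_coe.mpr this

theorem mul_inv_le_one' {I : FractionalIdeal D⁰ (FractionRing D)} (hI : I ≠ 0) (h : I ≤ 1) :
    I * I⁻¹ ≤ 1 := by
  have : I⁻¹ ≤ 1 / I := le_rfl
  rw [le_div_iff_mul_le hI] at this
  rwa [mul_comm]


section Valuation

variable [ValuationRing D]

theorem span_finset_principal (s : Finset (FractionRing D)) :
    ∃ x : FractionRing D, Submodule.span D (s : Set (FractionRing D)) =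
      Submodule.span D {x} := by
  classical
  induction s using Finset.induction_on with
  | empty => exact ⟨0, by simp⟩
  | insert a s' hnot ih =>
    obtain ⟨x, hx⟩ := ih
    rw [Finset.coe_insert, Submodule.span_insert, hx]
    by_cases ha : a = 0
    · exact ⟨x, by simp [ha]⟩
    by_cases hx0 : x = 0
    · exact ⟨a, by simp [hx0, sup_comm]⟩
    rcases ValuationRing.isInteger_or_isInteger D (a * x⁻¹ : FractionRing D) with
      ⟨c, hc⟩ | ⟨c, hc⟩
    · refine ⟨x, ?_⟩
      have : a = c • x := by
        rw [Algebra.smul_def, hc, mul_assoc, inv_mul_cancel₀ hx0, mul_one]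
      have h1 : Submodule.span D {a} ≤ Submodule.span D {x} := by
        rw [Submodule.span_le, Set.singleton_subset_iff]
        exact this ▸ Submodule.smul_mem _ c (Submodule.mem_span_singleton_self x)
      rw [sup_eq_right.mpr h1]
    · refine ⟨a, ?_⟩
      have hinv : (a * x⁻¹)⁻¹ = x * a⁻¹ := by
        rw [mul_inv, inv_inv, mul_comm]
      have : x = c • a := by
        rw [Algebra.smul_def, hc, hinv, mul_assoc, inv_mul_cancel₀ ha, mul_one]
      have h1 : Submodule.span D {x} ≤ Submodule.span D {a} := by
        rw [Submodule.span_le, Set.singleton_subset_iff]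
        exact this ▸ Submodule.smul_mem _ c (Submodule.mem_span_singleton_self a)
      rw [sup_eq_left.mpr h1]

theorem fg_principal (F : FractionalIdeal D⁰ (FractionRing D))
    (h : (F : Submodule D (FractionRing D)).FG) :
    ∃ x : FractionRing D, F = spanSingleton D⁰ x := by
  obtain ⟨s, hs⟩ := h
  obtain ⟨x, hx⟩ := span_finset_principal (D := D) s
  refine ⟨x, coeToSubmodule_injective ?_⟩
  show (F : Submodule D (FractionRing D)) = (spanSingleton D⁰ x : FractionalIdeal D⁰ (FractionRing D))
  rw [coe_spanSingleton, ← hx, hs]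

theorem tClos_eq_self (E : FractionalIdeal D⁰ (FractionRing D)) :
    tClos D E = (E : Submodule D (FractionRing D)) := by
  refine le_antisymm (tClos_le fun F h1 h2 h3 => ?_) (coe_le_tClos E)
  obtain ⟨x, rfl⟩ := fg_principal F h3
  rw [spanSingleton_inv, spanSingleton_inv, inv_inv]
  exact coe_le_coe.mpr h2

end Valuation

section GCD

theorem exists_gcd_finset [GCDMonoid D] (s : Finset D) :
    ∃ d : D, (∀ a ∈ s, d ∣ a) ∧ ∀ e : D, (∀ a ∈ s, e ∣ a) → e ∣ d := by
  classical
  induction s using Finset.induction_on with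
  | empty => exact ⟨0, by simp, fun e _ => dvd_zero e⟩
  | insert a s' hnot ih =>
    obtain ⟨d, hd, hdd⟩ := ih
    refine ⟨gcd a d, ?_, ?_⟩
    · intro b hb
      rcases Finset.mem_insert.mp hb with rfl | hb
      · exact gcd_dvd_left _ _
      · exact (gcd_dvd_right a d).trans (hd b hb)
    · intro e he
      exact dvd_gcd (he a (Finset.mem_insert_self a s'))
        (hdd e fun b hb => he b (Finset.mem_insert_of_mem hb))

theorem euclid [GCDMonoid D] {p q : D} (hq : q ≠ 0) :
    ∃ p₀ q₀ : D, p = gcd p q * p₀ ∧ q = gcd p q * q₀ ∧ q₀ ≠ 0 ∧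
      ∀ a : D, q₀ ∣ p₀ * a → q₀ ∣ a := by
  obtain ⟨p₀, hp₀⟩ := gcd_dvd_left p q
  obtain ⟨q₀, hq₀⟩ := gcd_dvd_right p q
  have hg : gcd p q ≠ 0 := fun h => hq (by rw [hq₀, h, zero_mul])
  have hq₀0 : q₀ ≠ 0 := fun h => hq (by rw [hq₀, h, mul_zero])
  have hcop : IsUnit (gcd p₀ q₀) := by
    have h1 : Associated (gcd (gcd p q * p₀) (gcd p q * q₀)) (gcd p q * gcd p₀ q₀) :=
      gcd_mul_left' _ _ _
    rw [← hp₀, ← hq₀] at h1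
    obtain ⟨u, hu⟩ := h1
    have := mul_left_cancel₀ hg hu
    exact this ▸ u.isUnit
  refine ⟨p₀, q₀, hp₀, hq₀, hq₀0, fun a ha => ?_⟩
  have h1 : q₀ ∣ gcd (p₀ * a) (q₀ * a) := dvd_gcd ha (dvd_mul_right q₀ a)
  have h2 : Associated (gcd (p₀ * a) (q₀ * a)) (gcd p₀ q₀ * a) := gcd_mul_right' a p₀ q₀
  have h3 : q₀ ∣ gcd p₀ q₀ * a := h1.trans h2.dvd
  obtain ⟨v, hv⟩ := hcop
  rw [← hv] at h3
  exact (Units.dvd_mul_left).mp h3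

theorem key_gcd [GCDMonoid D] {s : Finset D} {d : D}
    (hd : ∀ a ∈ s, d ∣ a) (hdd : ∀ e : D, (∀ a ∈ s, e ∣ a) → e ∣ d)
    (z : FractionRing D)
    (hz : ∀ a ∈ s, z * algebraMap D (FractionRing D) a ∈
      (1 : FractionalIdeal D⁰ (FractionRing D))) :
    z * algebraMap D (FractionRing D) d ∈ (1 : FractionalIdeal D⁰ (FractionRing D)) := by
  by_cases hz0 : z = 0
  · rw [hz0, zero_mul]; exact zero_mem _
  obtain ⟨p, q, hq, rfl⟩ := IsFractionRing.div_surjective (A := D) z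
  have hqD : q ≠ 0 := nonZeroDivisors.ne_zero hq
  have inj := IsFractionRing.injective D (FractionRing D)
  have hqK : algebraMap D (FractionRing D) q ≠ 0 := fun h => hqD (inj (by rw [h, _root_.map_zero]))
  obtain ⟨p₀, q₀, hp₀, hq₀, hq₀0, heuclid⟩ := euclid (p := p) hqD
  have hgK : algebraMap D (FractionRing D) (gcd p q) ≠ 0 := fun h => by
    apply hqD
    have : gcd p q = 0 := inj (by rw [h, _root_.map_zero])
    rw [hq₀, this, zero_mul]
  have hq₀K : algebraMap D (FractionRing D) q₀ ≠ 0 := fun h => hq₀0 (inj (by rw [h, _root_.map_zero]))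
  have hcross : p * q₀ = p₀ * q := by
    conv_lhs => rw [hp₀]
    conv_rhs => rw [hq₀]
    ring
  have hzeq : algebraMap D (FractionRing D) p / algebraMap D (FractionRing D) q =
      algebraMap D (FractionRing D) p₀ / algebraMap D (FractionRing D) q₀ := by
    rw [div_eq_div_iff hqK hq₀K, ← _root_.map_mul, ← _root_.map_mul, hcross]
  have hdvd : ∀ a ∈ s, q₀ ∣ a := by
    intro a ha
    have := hz a ha
    rw [hzeq] at this
    obtain ⟨c, hc⟩ := (FractionalIdeal.mem_one_iff _).mp this
    have hc2 : algebraMap D (FractionRing D) (p₀ * a) = algebraMap D (FractionRing D) (q₀ * c) := by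
      rw [_root_.map_mul, _root_.map_mul, hc]
      field_simp
    exact heuclid a ⟨c, inj hc2⟩
  obtain ⟨e, he⟩ := hdd q₀ hdvd
  rw [hzeq, he]
  refine (FractionalIdeal.mem_one_iff _).mpr ⟨p₀ * e, ?_⟩
  rw [_root_.map_mul, _root_.map_mul]
  field_simp

end GCD

theorem gcd_t_invertible [GCDMonoid D] (I : Ideal D) (hI : I ≠ ⊥) (hfg : I.FG) :
    tClos D ((I : FractionalIdeal D⁰ (FractionRing D)) *
        (I : FractionalIdeal D⁰ (FractionRing D))⁻¹) =
      ((1 : FractionalIdeal D⁰ (FractionRing D)) : Submodule D (FractionRing D)) := by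
  obtain ⟨s, rfl⟩ := hfg
  set K := FractionRing D
  set Ic : FractionalIdeal D⁰ K := (Ideal.span (s : Set D) : FractionalIdeal D⁰ K) with hIc
  have hIc0 : Ic ≠ 0 := coeIdeal_ne_zero.mpr hI
  obtain ⟨d, hd, hdd⟩ := exists_gcd_finset (D := D) s
  have hd0 : d ≠ 0 := by
    intro h
    apply hI
    rw [Ideal.span_eq_bot]
    intro a ha
    exact zero_dvd_iff.mp (h ▸ hd a ha)
  have inj := IsFractionRing.injective D K
  have hdK : algebraMap D K d ≠ 0 := fun h => hd0 (inj (by rw [h, _root_.map_zero]))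
  have hdiv : ∀ i ∈ Ideal.span (s : Set D), d ∣ i := by
    intro i hi
    have : Ideal.span (s : Set D) ≤ Ideal.span {d} := by
      rw [Ideal.span_le]
      intro a ha
      exact Ideal.mem_span_singleton.mpr (hd a ha)
    exact Ideal.mem_span_singleton.mp (this hi)
  set F : FractionalIdeal D⁰ K := spanSingleton D⁰ (algebraMap D K d)⁻¹ * Ic with hF
  -- F ≤ 1
  have hFle1 : F ≤ 1 := by
    rw [hF]
    refine mul_le.mpr fun m hm n hn => ?_
    obtain ⟨c, rfl⟩ := (mem_spanSingleton _).mp hm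
    obtain ⟨i, hi, rfl⟩ := (mem_coeIdeal _).mp hn
    obtain ⟨e, he⟩ := hdiv i hi
    refine (mem_one_iff _).mpr ⟨c * e, ?_⟩
    rw [_root_.map_mul, Algebra.smul_def, he, _root_.map_mul]
    rw [mul_assoc, inv_mul_cancel_left₀ hdK]
  -- spanSingleton d⁻¹ ≤ Ic⁻¹
  have hsub : spanSingleton D⁰ (algebraMap D K d)⁻¹ ≤ Ic⁻¹ := by
    rw [spanSingleton_le_iff_mem, mem_inv_iff hIc0]
    intro y hy
    obtain ⟨i, hi, rfl⟩ := (mem_coeIdeal _).mp hy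
    obtain ⟨e, he⟩ := hdiv i hi
    refine (mem_one_iff _).mpr ⟨e, ?_⟩
    rw [he, _root_.map_mul]
    rw [inv_mul_cancel_left₀ hdK]
  have hFle : F ≤ Ic * Ic⁻¹ := by
    rw [hF, mul_comm]
    exact mul_le_mul_right hsub Ic
  -- F ≠ 0
  obtain ⟨a₀, ha₀s, ha₀⟩ : ∃ a ∈ s, a ≠ 0 := by
    by_contra h
    push_neg at h
    exact hI (Ideal.span_eq_bot.mpr fun a ha => h a (by exact_mod_cast ha))
  have ha₀K : algebraMap D K a₀ ≠ 0 := fun h => ha₀ (inj (by rw [h, _root_.map_zero]))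
  have hmem₀ : (algebraMap D K d)⁻¹ * algebraMap D K a₀ ∈ F := by
    rw [hF]
    exact mul_mem_mul (mem_spanSingleton_self _ _)
      ((mem_coeIdeal _).mpr ⟨a₀, Ideal.subset_span (by exact_mod_cast ha₀s), rfl⟩)
  have hF0 : F ≠ 0 := by
    intro h
    rw [h] at hmem₀
    exact mul_ne_zero (inv_ne_zero hdK) ha₀K ((mem_zero_iff _).mp hmem₀)
  -- F is finitely generated
  have hFfg : (F : Submodule D K).FG := by
    rw [hF, coe_mul, coe_spanSingleton, coe_coeIdeal]
    refine Submodule.FG.mul ⟨{(algebraMap D K d)⁻¹}, by simp⟩ ?_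
    rw [IsLocalization.coeSubmodule]
    exact Submodule.FG.map _ ⟨s, rfl⟩
  -- F⁻¹ = 1
  have hFinv : F⁻¹ = 1 := by
    refine le_antisymm ?_ ?_
    · rw [← coe_le_coe]
      intro x hx
      rw [mem_coe, mem_inv_iff hF0] at hx
      have hzz : ∀ a ∈ s, (x * (algebraMap D K d)⁻¹) * algebraMap D K a ∈
          (1 : FractionalIdeal D⁰ K) := by
        intro a ha
        have hmem : (algebraMap D K d)⁻¹ * algebraMap D K a ∈ F := by
          rw [hF]
          exact mul_mem_mul (mem_spanSingleton_self _ _)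
            ((mem_coeIdeal _).mpr ⟨a, Ideal.subset_span (by exact_mod_cast ha), rfl⟩)
        have := hx _ hmem
        rwa [← mul_assoc] at this
      have hk := key_gcd hd hdd (x * (algebraMap D K d)⁻¹) hzz
      rw [mul_assoc, inv_mul_cancel₀ hdK, mul_one] at hk
      rw [mem_coe]
      exact hk
    · rw [inv_eq, le_div_iff_mul_le hF0, one_mul]
      exact hFle1
  -- conclude
  refine le_antisymm (tClos_le_one (mul_inv_le_one' hIc0 coeIdeal_le_one)) ?_
  have h1 : (((F⁻¹)⁻¹ : FractionalIdeal D⁰ K) : Submodule D K) ≤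
      tClos D (Ic * Ic⁻¹) := le_tClos_of hF0 hFle hFfg
  rwa [hFinv, inv_one'] at h1

theorem gcdMonoid_of_inf_principal
    (h : ∀ a b : D, a ≠ 0 → b ≠ 0 → (Ideal.span {a} ⊓ Ideal.span {b}).IsPrincipal) :
    Nonempty (GCDMonoid D) := by
  classical
  have hP : ∀ a b : D, (Ideal.span {a} ⊓ Ideal.span {b}).IsPrincipal := by
    intro a b
    rcases eq_or_ne a 0 with rfl | ha
    · rw [Ideal.span_singleton_eq_bot.mpr rfl, bot_inf_eq]
      exact ⟨⟨0, (Ideal.span_singleton_eq_bot.mpr rfl).symm⟩⟩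
    rcases eq_or_ne b 0 with rfl | hb
    · rw [Ideal.span_singleton_eq_bot.mpr rfl, inf_bot_eq]
      exact ⟨⟨0, (Ideal.span_singleton_eq_bot.mpr rfl).symm⟩⟩
    exact h a b ha hb
  refine ⟨gcdMonoidOfLCM (fun a b =>
    @Submodule.IsPrincipal.generator D D _ _ _ (Ideal.span {a} ⊓ Ideal.span {b}) (hP a b))
    ?_ ?_ ?_⟩
  · intro a b
    have := @Submodule.IsPrincipal.generator_mem D D _ _ _
      (Ideal.span {a} ⊓ Ideal.span {b}) (hP a b)
    exact Ideal.mem_span_singleton.mp this.1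
  · intro a b
    have := @Submodule.IsPrincipal.generator_mem D D _ _ _
      (Ideal.span {a} ⊓ Ideal.span {b}) (hP a b)
    exact Ideal.mem_span_singleton.mp this.2
  · intro a b c hca hba
    have hmem : a ∈ Ideal.span {c} ⊓ Ideal.span {b} :=
      ⟨Ideal.mem_span_singleton.mpr hca, Ideal.mem_span_singleton.mpr hba⟩
    have hgen := @Ideal.span_singleton_generator D _
      (Ideal.span {c} ⊓ Ideal.span {b}) (hP c b)
    rw [← hgen] at hmem
    exact Ideal.mem_span_singleton.mp hmem

theorem isTLocal_of_valuationRing [ValuationRing D] : IsTLocal D :=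
  ⟨inferInstance, (tClos_eq_self _).symm⟩


end TLocalAux


/-- For an integral domain `D` the following are equivalent:
(i) `D` is a valuation domain;
(ii) `D` is a `t`-local GCD domain (`aD ∩ bD` is principal for all nonzero `a`, `b`);
(iii) `D` is a `t`-local Prüfer `v`-multiplication domain (every nonzero finitely
generated ideal is `t`-invertible). -/
theorem valuation_iff_t_local_gcd_iff_t_local_pvmd (D : Type*) [CommRing D]
    [IsDomain D] :
    List.TFAE
      [ ValuationRing D,
        IsTLocal D ∧ ∀ a b : D, a ≠ 0 → b ≠ 0 →
          (Ideal.span {a} ⊓ Ideal.span {b}).IsPrincipal,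
        IsTLocal D ∧ ∀ I : Ideal D, I ≠ ⊥ → I.FG →
          tClos D ((I : FractionalIdeal D⁰ (FractionRing D)) *
              (I : FractionalIdeal D⁰ (FractionRing D))⁻¹) =
            ((1 : FractionalIdeal D⁰ (FractionRing D)) :
              Submodule D (FractionRing D)) ] := by
  open TLocalAux FractionalIdeal in
  tfae_have 1 → 2 := by
    intro hv
    refine ⟨isTLocal_of_valuationRing, fun a b _ _ => ?_⟩
    rcases ValuationRing.dvd_total a b with hab | hba
    · rw [inf_eq_right.mpr (Ideal.span_singleton_le_span_singleton.mpr hab)]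
      exact ⟨⟨b, rfl⟩⟩
    · rw [inf_eq_left.mpr (Ideal.span_singleton_le_span_singleton.mpr hba)]
      exact ⟨⟨a, rfl⟩⟩
  tfae_have 2 → 3 := by
    rintro ⟨hT, hgcd⟩
    obtain ⟨hg⟩ := gcdMonoid_of_inf_principal hgcd
    exact ⟨hT, fun I hI hfg => gcd_t_invertible I hI hfg⟩
  tfae_have 3 → 1 := by
    rintro ⟨⟨hloc, hT⟩, hinv⟩
    haveI := hloc
    haveI : IsBezout D := by
      rw [IsBezout.iff_span_pair_isPrincipal]
      intro x y
      rcases eq_or_ne (Ideal.span {x, y}) ⊥ with hbot | hne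
      · rw [hbot]; exact ⟨⟨0, (Ideal.span_singleton_eq_bot.mpr rfl).symm⟩⟩
      have hfg : (Ideal.span {x, y}).FG := Submodule.fg_span (Set.toFinite _)
      have htc := hinv (Ideal.span {x, y}) hne hfg
      set K := FractionRing D
      set Ic : FractionalIdeal D⁰ K := (Ideal.span {x, y} : FractionalIdeal D⁰ K)
      have hle1 : Ic * Ic⁻¹ ≤ 1 := mul_inv_le_one' (coeIdeal_ne_zero.mpr hne) coeIdeal_le_one
      obtain ⟨J, hJ⟩ := le_one_iff_exists_coeIdeal.mp hle1
      have hJtop : J = ⊤ := by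
        by_contra hJne
        have hJm : J ≤ IsLocalRing.maximalIdeal D := IsLocalRing.le_maximalIdeal hJne
        have h1 : tClos D (Ic * Ic⁻¹) ≤ tClos D (IsLocalRing.maximalIdeal D :
            FractionalIdeal D⁰ K) := by
          rw [← hJ]
          exact tClos_mono ((coeIdeal_le_coeIdeal K).mpr hJm)
        rw [htc, ← hT] at h1
        have h2 : (1 : K) ∈ ((IsLocalRing.maximalIdeal D : FractionalIdeal D⁰ K) :
            Submodule D K) := h1 ((mem_one_iff _).mpr ⟨1, _root_.map_one _⟩)
        rw [mem_coe] at h2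
        obtain ⟨u, hu, hu1⟩ := (mem_coeIdeal _).mp h2
        have : u = 1 := IsFractionRing.injective D K (by rw [hu1, _root_.map_one])
        rw [this] at hu
        exact IsLocalRing.mem_maximalIdeal 1 |>.mp hu isUnit_one
      have hunit : IsUnit Ic := by
        rw [← mul_inv_cancel_iff_isUnit K]
        rw [← hJ, hJtop, coeIdeal_top]
      have hfin : {I : Ideal D | I.IsMaximal}.Finite :=
        (Set.finite_singleton (IsLocalRing.maximalIdeal D)).subset
          fun I hI => IsLocalRing.eq_maximalIdeal hI
      exact Ideal.IsPrincipal.of_finite_maximals_of_isUnit hfin hunit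
    infer_instance
  tfae_finish
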